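/- arXiv:1505.07316 — 3 statements merged into one kernel-verified Lean document; each statement's English description precedes it below -/
import Mathlib

section
/- Let ρ be a probability measure on ℝ^d with compact support contained in the ball of radius S, let φ : [0,∞) → (0,∞) be nonincreasing and bounded, and set η = φ(2S). Define the operator M on bounded measurable functions u : supp ρ → ℝ by M[u](x) = Φ(x)u(x) − ∫ (φ(|x−y|) − η) u(y) dρ(y), where Φ(x) = ∫ φ(|x−y|) dρ(y). Then for every bounded u, the sup-norm of M[u] over supp ρ is at least η times the sup-norm of u over supp ρ. -/
open MeasureTheory

def measureSupport {α : Type*} [TopologicalSpace α] [MeasurableSpace α]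
    (μ : Measure α) : Set α :=
  {x | ∀ U ∈ nhds x, 0 < μ U}

theorem opM_lower_bound {d : ℕ} (S : ℝ)
    (ρ : Measure (EuclideanSpace ℝ (Fin d))) [IsProbabilityMeasure ρ]
    (hsupp : measureSupport ρ ⊆ Metric.closedBall 0 S)
    (hcompact : IsCompact (measureSupport ρ))
    (φ : ℝ → ℝ) (hφpos : ∀ r : ℝ, 0 ≤ r → 0 < φ r)
    (hφmono : AntitoneOn φ (Set.Ici 0)) (hφmeas : Measurable φ)
    (B : ℝ) (hφbdd : ∀ r : ℝ, 0 ≤ r → φ r ≤ B)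
    (η : ℝ) (hη : η = φ (2 * S))
    (u : EuclideanSpace ℝ (Fin d) → ℝ) (hu : Measurable u)
    (Bu : ℝ) (hubdd : ∀ x ∈ measureSupport ρ, |u x| ≤ Bu) :
    η * sSup ((fun x => |u x|) '' measureSupport ρ) ≤
      sSup ((fun x =>
        |(∫ y, φ ‖x - y‖ ∂ρ) * u x - ∫ y, (φ ‖x - y‖ - η) * u y ∂ρ|) ''
          measureSupport ρ) := by
  classical
  set sp := measureSupport ρ with hsp
  -- complement of the support is null
  have hnull : ρ spᶜ = 0 := by
    apply measure_null_of_locally_null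
    intro x hx
    simp only [hsp, measureSupport, Set.mem_compl_iff, Set.mem_setOf_eq, not_forall] at hx
    obtain ⟨U, hU, hU0⟩ := hx
    exact ⟨U, mem_nhdsWithin_of_mem_nhds hU,
      le_antisymm (le_of_not_gt hU0) zero_le⟩
  have hae : ∀ᵐ y ∂ρ, y ∈ sp := by
    rw [ae_iff]
    simpa [Set.compl_def] using hnull
  -- the support is nonempty
  have hne : sp.Nonempty := by
    by_contra h
    rw [Set.not_nonempty_iff_eq_empty] at h
    have h1 : ρ Set.univ = 0 := by
      have h2 : (Set.univ : Set (EuclideanSpace ℝ (Fin d))) = spᶜ := by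
        rw [h]; simp
      rw [h2, hnull]
    simp [measure_univ] at h1
  obtain ⟨x0, hx0⟩ := hne
  have hS : 0 ≤ S := le_trans (norm_nonneg x0) (by
    have := hsupp hx0
    simpa [Metric.mem_closedBall, dist_eq_norm] using this)
  -- basic bounds on φ and η
  have hB : 0 < B := lt_of_lt_of_le (hφpos 0 le_rfl) (hφbdd 0 le_rfl)
  have hηpos : 0 < η := hη ▸ hφpos (2 * S) (by positivity)
  have hdist : ∀ x ∈ sp, ∀ y ∈ sp, ‖x - y‖ ≤ 2 * S := by
    intro x hx y hy
    have hx' : ‖x‖ ≤ S := by simpa [Metric.mem_closedBall, dist_eq_norm] using hsupp hx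
    have hy' : ‖y‖ ≤ S := by simpa [Metric.mem_closedBall, dist_eq_norm] using hsupp hy
    calc ‖x - y‖ ≤ ‖x‖ + ‖y‖ := norm_sub_le x y
    _ ≤ 2 * S := by linarith
  have hηφ : ∀ x ∈ sp, ∀ y ∈ sp, η ≤ φ ‖x - y‖ := by
    intro x hx y hy
    rw [hη]
    exact hφmono (Set.mem_Ici.2 (norm_nonneg _)) (Set.mem_Ici.2 (by positivity))
      (hdist x hx y hy)
  have hBu : 0 ≤ Bu := le_trans (abs_nonneg _) (hubdd x0 hx0)
  -- K = sup of |u| on the support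
  set K := sSup ((fun x => |u x|) '' sp) with hK
  have hKbdd : BddAbove ((fun x => |u x|) '' sp) := by
    refine ⟨Bu, ?_⟩
    rintro _ ⟨x, hx, rfl⟩
    exact hubdd x hx
  have hKne : ((fun x => |u x|) '' sp).Nonempty := ⟨_, Set.mem_image_of_mem _ hx0⟩
  have hKle : ∀ y ∈ sp, |u y| ≤ K := fun y hy =>
    le_csSup hKbdd (Set.mem_image_of_mem _ hy)
  have hK0 : 0 ≤ K := le_trans (abs_nonneg _) (hKle x0 hx0)
  -- measurability and integrability facts
  have hmeas1 : ∀ x : EuclideanSpace ℝ (Fin d), Measurable (fun y => φ ‖x - y‖) := fun x =>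
    hφmeas.comp ((measurable_const.sub measurable_id).norm)
  have hint1 : ∀ x : EuclideanSpace ℝ (Fin d), Integrable (fun y => φ ‖x - y‖) ρ := by
    intro x
    refine Integrable.mono' (integrable_const B) (hmeas1 x).aestronglyMeasurable ?_
    filter_upwards with y
    rw [Real.norm_eq_abs, abs_of_pos (hφpos _ (norm_nonneg _))]
    exact hφbdd _ (norm_nonneg _)
  have hint2 : ∀ x : EuclideanSpace ℝ (Fin d), Integrable (fun y => (φ ‖x - y‖ - η) * u y) ρ := by
    intro x
    refine Integrable.mono' (integrable_const ((B + η) * Bu))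
      (((hmeas1 x).sub measurable_const).mul hu).aestronglyMeasurable ?_
    filter_upwards [hae] with y hy
    rw [Real.norm_eq_abs, abs_mul]
    have h1 : |φ ‖x - y‖ - η| ≤ B + η := by
      have := hφpos ‖x - y‖ (norm_nonneg _)
      have := hφbdd ‖x - y‖ (norm_nonneg _)
      rw [abs_le]; constructor <;> nlinarith
    exact mul_le_mul h1 (hubdd y hy) (abs_nonneg _) (by positivity)
  -- Φ bounds on the support
  have hΦB : ∀ x : EuclideanSpace ℝ (Fin d), (∫ y, φ ‖x - y‖ ∂ρ) ≤ B := by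
    intro x
    calc (∫ y, φ ‖x - y‖ ∂ρ) ≤ ∫ _, B ∂ρ := by
          refine integral_mono (hint1 x) (integrable_const B) fun y => ?_
          exact hφbdd _ (norm_nonneg _)
    _ = B := by simp
  have hΦη : ∀ x ∈ sp, η ≤ ∫ y, φ ‖x - y‖ ∂ρ := by
    intro x hx
    calc η = ∫ _, η ∂ρ := by simp
    _ ≤ ∫ y, φ ‖x - y‖ ∂ρ := by
          refine integral_mono_ae (integrable_const η) (hint1 x) ?_
          filter_upwards [hae] with y hy
          exact hηφ x hx y hy
  -- bound on the second integral
  have hI : ∀ x ∈ sp, |∫ y, (φ ‖x - y‖ - η) * u y ∂ρ| ≤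
      ((∫ y, φ ‖x - y‖ ∂ρ) - η) * K := by
    intro x hx
    have h1 : |∫ y, (φ ‖x - y‖ - η) * u y ∂ρ| ≤ ∫ y, |(φ ‖x - y‖ - η) * u y| ∂ρ := by
      simpa only [Real.norm_eq_abs] using
        norm_integral_le_integral_norm (μ := ρ) (fun y => (φ ‖x - y‖ - η) * u y)
    have h2 : ∫ y, |(φ ‖x - y‖ - η) * u y| ∂ρ ≤ ∫ y, (φ ‖x - y‖ - η) * K ∂ρ := by
      refine integral_mono_ae (hint2 x).abs (((hint1 x).sub (integrable_const η)).mul_const K) ?_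
      filter_upwards [hae] with y hy
      rw [abs_mul, abs_of_nonneg (by linarith [hηφ x hx y hy])]
      exact mul_le_mul_of_nonneg_left (hKle y hy) (by linarith [hηφ x hx y hy])
    have h3 : ∫ y, (φ ‖x - y‖ - η) * K ∂ρ = ((∫ y, φ ‖x - y‖ ∂ρ) - η) * K := by
      rw [integral_mul_const, integral_sub (hint1 x) (integrable_const η)]
      simp
    linarith
  -- T = sup of |M[u]| on the support
  set T := sSup ((fun x =>
      |(∫ y, φ ‖x - y‖ ∂ρ) * u x - ∫ y, (φ ‖x - y‖ - η) * u y ∂ρ|) '' sp) with hT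
  have hTbdd : BddAbove ((fun x =>
      |(∫ y, φ ‖x - y‖ ∂ρ) * u x - ∫ y, (φ ‖x - y‖ - η) * u y ∂ρ|) '' sp) := by
    refine ⟨B * Bu + (B - η) * K, ?_⟩
    rintro _ ⟨x, hx, rfl⟩
    have h1 : |(∫ y, φ ‖x - y‖ ∂ρ) * u x| ≤ B * Bu := by
      rw [abs_mul, abs_of_nonneg (le_trans hηpos.le (hΦη x hx))]
      exact mul_le_mul (hΦB x) (hubdd x hx) (abs_nonneg _) hB.le
    have h2 := hI x hx
    have h3 : ((∫ y, φ ‖x - y‖ ∂ρ) - η) * K ≤ (B - η) * K :=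
      mul_le_mul_of_nonneg_right (by linarith [hΦB x]) hK0
    calc |(∫ y, φ ‖x - y‖ ∂ρ) * u x - ∫ y, (φ ‖x - y‖ - η) * u y ∂ρ|
        ≤ |(∫ y, φ ‖x - y‖ ∂ρ) * u x| + |∫ y, (φ ‖x - y‖ - η) * u y ∂ρ| := abs_sub _ _
    _ ≤ B * Bu + (B - η) * K := by linarith
  have hTle : ∀ x ∈ sp,
      |(∫ y, φ ‖x - y‖ ∂ρ) * u x - ∫ y, (φ ‖x - y‖ - η) * u y ∂ρ| ≤ T := fun x hx =>
    le_csSup hTbdd (Set.mem_image_of_mem _ hx)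
  -- main estimate: for every ε > 0, η K ≤ T + B ε
  have hmain : ∀ ε : ℝ, 0 < ε → η * K ≤ T + B * ε := by
    intro ε hε
    obtain ⟨_, ⟨x, hx, rfl⟩, hxu⟩ := exists_lt_of_lt_csSup hKne
      (show K - ε < K by linarith)
    set Φx := ∫ y, φ ‖x - y‖ ∂ρ with hΦx
    have hΦx0 : 0 ≤ Φx := le_trans hηpos.le (hΦη x hx)
    have h1 : Φx * (K - ε) ≤ Φx * |u x| :=
      mul_le_mul_of_nonneg_left hxu.le hΦx0
    have h2 : Φx * |u x| - ((Φx - η) * K) ≤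
        |Φx * u x - ∫ y, (φ ‖x - y‖ - η) * u y ∂ρ| := by
      have h3 := hI x hx
      have h4 : Φx * |u x| - |∫ y, (φ ‖x - y‖ - η) * u y ∂ρ| ≤
          |Φx * u x - ∫ y, (φ ‖x - y‖ - η) * u y ∂ρ| := by
        have := abs_sub_abs_le_abs_sub (Φx * u x) (∫ y, (φ ‖x - y‖ - η) * u y ∂ρ)
        rw [abs_mul, abs_of_nonneg hΦx0] at this
        linarith
      linarith
    have h5 := hTle x hx
    have h6 : Φx * ε ≤ B * ε := mul_le_mul_of_nonneg_right (hΦB x) hε.le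
    nlinarith
  -- conclude
  refine le_of_forall_pos_le_add fun δ hδ => ?_
  have := hmain (δ / B) (by positivity)
  rw [mul_div_cancel₀ _ (ne_of_gt hB)] at this
  exact this
end

section
/- Under the assumptions of the previous statement (with scalar-valued u), the operator M is injective on L^∞(supp ρ): if M[u] = 0 on supp ρ then u = 0 on supp ρ. -/
open MeasureTheory

theorem opM_injective {d : ℕ} (S : ℝ)
    (ρ : Measure (EuclideanSpace ℝ (Fin d))) [IsProbabilityMeasure ρ]
    (hsupp : measureSupport ρ ⊆ Metric.closedBall 0 S)
    (hcompact : IsCompact (measureSupport ρ))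
    (φ : ℝ → ℝ) (hφpos : ∀ r : ℝ, 0 ≤ r → 0 < φ r)
    (hφmono : AntitoneOn φ (Set.Ici 0)) (hφmeas : Measurable φ)
    (B : ℝ) (hφbdd : ∀ r : ℝ, 0 ≤ r → φ r ≤ B)
    (η : ℝ) (hη : η = φ (2 * S))
    (u : EuclideanSpace ℝ (Fin d) → ℝ) (hu : Measurable u)
    (Bu : ℝ) (hubdd : ∀ x ∈ measureSupport ρ, |u x| ≤ Bu)
    (hMu : ∀ x ∈ measureSupport ρ,
      (∫ y, φ ‖x - y‖ ∂ρ) * u x - ∫ y, (φ ‖x - y‖ - η) * u y ∂ρ = 0) :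
    ∀ x ∈ measureSupport ρ, u x = 0 := by
  set K := measureSupport ρ with hKdef
  -- the complement of the support is null
  have hK0 : ρ Kᶜ = 0 := by
    apply measure_null_of_locally_null
    intro x hx
    simp only [hKdef, measureSupport, Set.mem_compl_iff, Set.mem_setOf_eq, not_forall] at hx
    obtain ⟨U, hU, hU0⟩ := hx
    refine ⟨U, mem_nhdsWithin_of_mem_nhds hU, ?_⟩
    simpa using hU0
  have haeK : ∀ᵐ y ∂ρ, y ∈ K := by
    rw [ae_iff]
    simpa [Set.compl_def] using hK0
  -- K is nonempty
  have hKne : K.Nonempty := by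
    by_contra h
    rw [Set.not_nonempty_iff_eq_empty] at h
    rw [h, Set.compl_empty] at hK0
    simp [measure_univ] at hK0
  obtain ⟨x₀, hx₀⟩ := hKne
  have hnormK : ∀ x ∈ K, ‖x‖ ≤ S := by
    intro x hx
    have := hsupp hx
    rwa [Metric.mem_closedBall, dist_zero_right] at this
  have hS : 0 ≤ S := le_trans (norm_nonneg x₀) (hnormK x₀ hx₀)
  have hη' : 0 < η := hη ▸ hφpos _ (by linarith)
  have hB : 0 < B := lt_of_lt_of_le hη' (hη ▸ hφbdd _ (by linarith))
  have hBu0 : 0 ≤ Bu := le_trans (abs_nonneg _) (hubdd x₀ hx₀)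
  -- the supremum of |u| on K
  set A : ℝ := sSup ((fun z => |u z|) '' K) with hAdef
  have hbdd : BddAbove ((fun z => |u z|) '' K) := by
    refine ⟨Bu, ?_⟩
    rintro _ ⟨z, hz, rfl⟩
    exact hubdd z hz
  have hne : ((fun z => |u z|) '' K).Nonempty := ⟨|u x₀|, ⟨x₀, hx₀, rfl⟩⟩
  have hA_ub : ∀ x ∈ K, |u x| ≤ A := fun x hx => le_csSup hbdd ⟨x, hx, rfl⟩
  have hA0 : 0 ≤ A := le_trans (abs_nonneg _) (hA_ub x₀ hx₀)
  -- the key estimate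
  have key : ∀ x ∈ K, B * |u x| ≤ B * A - η * A := by
    intro x hx
    have hmf : Measurable (fun y : EuclideanSpace ℝ (Fin d) => φ ‖x - y‖) :=
      hφmeas.comp ((measurable_const.sub measurable_id).norm)
    have hfb : ∀ y : EuclideanSpace ℝ (Fin d), ‖φ ‖x - y‖‖ ≤ B := by
      intro y
      rw [Real.norm_eq_abs, abs_of_pos (hφpos _ (norm_nonneg _))]
      exact hφbdd _ (norm_nonneg _)
    have hintf : Integrable (fun y => φ ‖x - y‖) ρ :=
      Integrable.mono' (integrable_const B) hmf.aestronglyMeasurable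
        (Filter.Eventually.of_forall hfb)
    have hge : ∀ᵐ y ∂ρ, η ≤ φ ‖x - y‖ := by
      filter_upwards [haeK] with y hy
      have h1 : ‖x - y‖ ≤ 2 * S := by
        have hxS := hnormK x hx
        have hyS := hnormK y hy
        calc ‖x - y‖ ≤ ‖x‖ + ‖y‖ := norm_sub_le _ _
          _ ≤ 2 * S := by linarith
      rw [hη]
      exact hφmono (Set.mem_Ici.mpr (norm_nonneg _)) (Set.mem_Ici.mpr (by linarith)) h1
    set I := ∫ y, φ ‖x - y‖ ∂ρ with hIdef
    have hIη : η ≤ I := by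
      have := integral_mono_ae (integrable_const η) hintf hge
      simpa using this
    have hIB : I ≤ B := by
      have := integral_mono_ae hintf (integrable_const B)
        (Filter.Eventually.of_forall fun y => hφbdd _ (norm_nonneg _))
      simpa using this
    have hI0 : 0 < I := lt_of_lt_of_le hη' hIη
    have hmg : Measurable (fun y : EuclideanSpace ℝ (Fin d) => (φ ‖x - y‖ - η) * u y) :=
      (hmf.sub measurable_const).mul hu
    have hintg : Integrable (fun y => (φ ‖x - y‖ - η) * u y) ρ := by
      apply Integrable.mono' (integrable_const ((B + η) * Bu)) hmg.aestronglyMeasurable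
      filter_upwards [haeK] with y hy
      rw [Real.norm_eq_abs, abs_mul]
      have h1 : |φ ‖x - y‖ - η| ≤ B + η := by
        have hp := hφpos ‖x - y‖ (norm_nonneg _)
        have hb := hφbdd ‖x - y‖ (norm_nonneg _)
        rw [abs_le]; constructor <;> linarith
      exact mul_le_mul h1 (hubdd y hy) (abs_nonneg _) (by positivity)
    have heq' : I * u x = ∫ y, (φ ‖x - y‖ - η) * u y ∂ρ := sub_eq_zero.mp (hMu x hx)
    have hbound : |∫ y, (φ ‖x - y‖ - η) * u y ∂ρ| ≤ (I - η) * A := by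
      calc |∫ y, (φ ‖x - y‖ - η) * u y ∂ρ|
          ≤ ∫ y, |(φ ‖x - y‖ - η) * u y| ∂ρ := by
            have := norm_integral_le_integral_norm (fun y => (φ ‖x - y‖ - η) * u y) (μ := ρ)
            simp only [Real.norm_eq_abs] at this
            exact this
        _ ≤ ∫ y, (φ ‖x - y‖ - η) * A ∂ρ := by
            apply integral_mono_ae hintg.abs ((hintf.sub (integrable_const η)).mul_const A)
            filter_upwards [haeK, hge] with y hy hgy
            rw [abs_mul, abs_of_nonneg (by linarith : (0:ℝ) ≤ φ ‖x - y‖ - η)]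
            exact mul_le_mul_of_nonneg_left (hA_ub y hy) (by linarith)
        _ = (I - η) * A := by
            rw [integral_mul_const, integral_sub hintf (integrable_const η), integral_const]
            simp [hIdef]
    have h2 : I * |u x| ≤ (I - η) * A := by
      have : I * |u x| = |I * u x| := by rw [abs_mul, abs_of_pos hI0]
      rw [this, heq']
      exact hbound
    nlinarith [mul_nonneg (sub_nonneg.mpr hIB) (sub_nonneg.mpr (hA_ub x hx))]
  -- conclude A ≤ 0
  have hA_le0 : A ≤ 0 := by
    have hAle : A ≤ (B * A - η * A) / B := by
      apply csSup_le hne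
      rintro _ ⟨z, hz, rfl⟩
      rw [le_div_iff₀ hB, mul_comm]
      exact key z hz
    have h3 : A * B ≤ B * A - η * A := (le_div_iff₀ hB).mp hAle
    nlinarith
  intro x hx
  have h4 : |u x| ≤ 0 := le_trans (hA_ub x hx) hA_le0
  exact abs_eq_zero.mp (le_antisymm h4 (abs_nonneg _))
end

section
/- Let ρ be a compactly supported probability measure on ℝ^d, supported in B_S(0), let φ : [0,∞) → (0,∞) be Lipschitz, bounded, and nonincreasing with η = φ(2S) > 0, and let G ∈ W^{1,∞}(ℝ^d; ℝ^d) (e.g. G = ∇K with ∇K ∈ W^{1,∞}). Suppose u : supp ρ → ℝ^d is bounded and satisfies Φ(x)u(x) = ∫ φ(|x−y|)u(y)dρ(y) − (G∗ρ)(x) on supp ρ together with ∫ u dρ = 0, where Φ = φ∗ρ. Then ‖u‖_{L^∞(supp ρ)} ≤ ‖G‖_{L^∞}/η. -/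
open MeasureTheory

theorem velocity_Linfty_bound {d : ℕ} (S : ℝ)
    (ρ : Measure (EuclideanSpace ℝ (Fin d))) [IsProbabilityMeasure ρ]
    (hsupp : measureSupport ρ ⊆ Metric.closedBall 0 S)
    (hcompact : IsCompact (measureSupport ρ))
    (φ : ℝ → ℝ) (hφpos : ∀ r : ℝ, 0 ≤ r → 0 < φ r)
    (hφmono : AntitoneOn φ (Set.Ici 0))
    (L : NNReal) (hφlip : LipschitzOnWith L φ (Set.Ici 0))
    (B : ℝ) (hφbdd : ∀ r : ℝ, 0 ≤ r → φ r ≤ B)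
    (η : ℝ) (hη : η = φ (2 * S)) (hηpos : 0 < η)
    (G : EuclideanSpace ℝ (Fin d) → EuclideanSpace ℝ (Fin d))
    (LG : NNReal) (hGlip : LipschitzWith LG G)
    (CG : ℝ) (hGbdd : ∀ x, ‖G x‖ ≤ CG)
    (u : EuclideanSpace ℝ (Fin d) → EuclideanSpace ℝ (Fin d))
    (hu : AEStronglyMeasurable u ρ)
    (Bu : ℝ) (hubdd : ∀ x ∈ measureSupport ρ, ‖u x‖ ≤ Bu)
    (heq : ∀ x ∈ measureSupport ρ,
      (∫ y, φ ‖x - y‖ ∂ρ) • u x =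
        (∫ y, φ ‖x - y‖ • u y ∂ρ) - ∫ y, G (x - y) ∂ρ)
    (hmom : (∫ y, u y ∂ρ) = 0) :
    ∀ x ∈ measureSupport ρ, ‖u x‖ ≤ CG / η := by
  have hnull : ρ (measureSupport ρ)ᶜ = 0 := by
    apply measure_null_of_locally_null
    intro x hx
    simp only [measureSupport, Set.mem_compl_iff, Set.mem_setOf_eq, not_forall] at hx
    obtain ⟨U, hU, hU0⟩ := hx
    exact ⟨U, nhdsWithin_le_nhds hU, le_antisymm (not_lt.1 hU0) bot_le⟩
  have hae : ∀ᵐ y ∂ρ, y ∈ measureSupport ρ := by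
    rw [ae_iff]; exact hnull
  intro x hx
  have hB : 0 < B := lt_of_lt_of_le (hφpos 0 le_rfl) (hφbdd 0 le_rfl)
  have hCG : 0 ≤ CG := le_trans (norm_nonneg _) (hGbdd 0)
  -- continuity of y ↦ φ ‖z - y‖
  have hφcont : ∀ z : EuclideanSpace ℝ (Fin d), Continuous (fun y => φ ‖z - y‖) :=
    fun z => hφlip.continuousOn.comp_continuous
      ((continuous_const.sub continuous_id).norm) (fun y => norm_nonneg _)
  have hφb : ∀ (z y : EuclideanSpace ℝ (Fin d)), ‖φ ‖z - y‖‖ ≤ B := fun z y => by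
    rw [Real.norm_eq_abs, abs_of_pos (hφpos _ (norm_nonneg _))]
    exact hφbdd _ (norm_nonneg _)
  have hint1 : ∀ z, Integrable (fun y => φ ‖z - y‖) ρ := fun z =>
    (integrable_const B).mono' (hφcont z).aestronglyMeasurable
      (Filter.Eventually.of_forall (hφb z))
  have huae : ∀ᵐ y ∂ρ, ‖u y‖ ≤ Bu := hae.mono fun y hy => hubdd y hy
  have huint : Integrable u ρ := (integrable_const Bu).mono' hu huae
  have hint2 : ∀ z, Integrable (fun y => φ ‖z - y‖ • u y) ρ := fun z =>
    (integrable_const (B * Bu)).mono' ((hφcont z).aestronglyMeasurable.smul hu)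
      (huae.mono fun y hy => by
        rw [norm_smul]
        exact mul_le_mul (hφb z y) hy (norm_nonneg _) hB.le)
  have hint3 : ∀ z, Integrable (fun y => G (z - y)) ρ :=
    fun z => (integrable_const CG).mono'
      ((hGlip.continuous.comp (continuous_const.sub continuous_id)).aestronglyMeasurable)
      (Filter.Eventually.of_forall fun y => hGbdd _)
  have hGle : ∀ z, ‖∫ y, G (z - y) ∂ρ‖ ≤ CG := fun z =>
    calc ‖∫ y, G (z - y) ∂ρ‖ ≤ ∫ y, ‖G (z - y)‖ ∂ρ := norm_integral_le_integral_norm _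
    _ ≤ ∫ _y, CG ∂ρ := integral_mono (hint3 z).norm (integrable_const _) fun y => hGbdd _
    _ = CG := by simp
  -- the 2S bound and lower bound on Φ
  have hdist : ∀ z ∈ measureSupport ρ, ∀ y ∈ measureSupport ρ, η ≤ φ ‖z - y‖ := by
    intro z hz y hy
    have hz' : ‖z‖ ≤ S := by simpa [Metric.mem_closedBall, dist_zero_right] using hsupp hz
    have hy' : ‖y‖ ≤ S := by simpa [Metric.mem_closedBall, dist_zero_right] using hsupp hy
    have h2S : ‖z - y‖ ≤ 2 * S := by
      calc ‖z - y‖ ≤ ‖z‖ + ‖y‖ := norm_sub_le _ _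
      _ ≤ 2 * S := by linarith
    rw [hη]
    exact hφmono (norm_nonneg _) (le_trans (norm_nonneg _) h2S) h2S
  have hΦlb : ∀ z ∈ measureSupport ρ, η ≤ ∫ y, φ ‖z - y‖ ∂ρ := by
    intro z hz
    calc η = ∫ _y, η ∂ρ := by simp
    _ ≤ ∫ y, φ ‖z - y‖ ∂ρ :=
      integral_mono_ae (integrable_const η) (hint1 z) (hae.mono fun y hy => hdist z hz y hy)
  have hΦub : ∀ z, (∫ y, φ ‖z - y‖ ∂ρ) ≤ B := by
    intro z
    have h := integral_mono (hint1 z) (integrable_const B) (fun y => hφbdd _ (norm_nonneg _))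
    simpa using h
  -- the supremum M
  set M := sSup ((fun y => ‖u y‖) '' measureSupport ρ) with hM
  have hne : ((fun y => ‖u y‖) '' measureSupport ρ).Nonempty := ⟨‖u x‖, x, hx, rfl⟩
  have hbdd : BddAbove ((fun y => ‖u y‖) '' measureSupport ρ) := by
    refine ⟨Bu, ?_⟩; rintro _ ⟨y, hy, rfl⟩; exact hubdd y hy
  have hxM : ∀ z ∈ measureSupport ρ, ‖u z‖ ≤ M := fun z hz => le_csSup hbdd ⟨z, hz, rfl⟩
  have hM0 : 0 ≤ M := le_trans (norm_nonneg _) (hxM x hx)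
  -- main estimate
  have hmain : ∀ z ∈ measureSupport ρ,
      (∫ y, φ ‖z - y‖ ∂ρ) * ‖u z‖ ≤ ((∫ y, φ ‖z - y‖ ∂ρ) - η) * M + CG := by
    intro z hz
    have he1 : (∫ y, φ ‖z - y‖ • u y ∂ρ) = ∫ y, (φ ‖z - y‖ - η) • u y ∂ρ := by
      have : (fun y => (φ ‖z - y‖ - η) • u y)
          = fun y => φ ‖z - y‖ • u y - η • u y := funext fun y => sub_smul _ _ _
      have hηu : Integrable (fun y => η • u y) ρ := huint.smul η
      rw [this, integral_sub (hint2 z) hηu, integral_smul, hmom, smul_zero, sub_zero]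
    have hint4 : Integrable (fun y => (φ ‖z - y‖ - η) • u y) ρ := by
      have : (fun y => (φ ‖z - y‖ - η) • u y)
          = fun y => φ ‖z - y‖ • u y - η • u y := funext fun y => sub_smul _ _ _
      rw [this]; exact (hint2 z).sub (huint.smul η)
    have hnorm : ‖∫ y, (φ ‖z - y‖ - η) • u y ∂ρ‖ ≤ ((∫ y, φ ‖z - y‖ ∂ρ) - η) * M := by
      calc ‖∫ y, (φ ‖z - y‖ - η) • u y ∂ρ‖ ≤ ∫ y, ‖(φ ‖z - y‖ - η) • u y‖ ∂ρ :=
        norm_integral_le_integral_norm _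
      _ ≤ ∫ y, (φ ‖z - y‖ - η) * M ∂ρ := by
        refine integral_mono_ae hint4.norm (((hint1 z).sub (integrable_const η)).mul_const M)
          (hae.mono fun y hy => ?_)
        show ‖(φ ‖z - y‖ - η) • u y‖ ≤ (φ ‖z - y‖ - η) * M
        rw [norm_smul, Real.norm_eq_abs, abs_of_nonneg (sub_nonneg.2 (hdist z hz y hy))]
        exact mul_le_mul_of_nonneg_left (hxM y hy) (sub_nonneg.2 (hdist z hz y hy))
      _ = ((∫ y, φ ‖z - y‖ ∂ρ) - η) * M := by
        rw [integral_mul_const, integral_sub (hint1 z) (integrable_const η)]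
        simp
    have hpos : 0 < ∫ y, φ ‖z - y‖ ∂ρ := lt_of_lt_of_le hηpos (hΦlb z hz)
    calc (∫ y, φ ‖z - y‖ ∂ρ) * ‖u z‖ = ‖(∫ y, φ ‖z - y‖ ∂ρ) • u z‖ := by
          rw [norm_smul, Real.norm_eq_abs, abs_of_pos hpos]
    _ = ‖(∫ y, φ ‖z - y‖ • u y ∂ρ) - ∫ y, G (z - y) ∂ρ‖ := by rw [heq z hz]
    _ ≤ ‖∫ y, φ ‖z - y‖ • u y ∂ρ‖ + ‖∫ y, G (z - y) ∂ρ‖ := norm_sub_le _ _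
    _ ≤ ((∫ y, φ ‖z - y‖ ∂ρ) - η) * M + CG := by
      rw [he1]; exact add_le_add hnorm (hGle z)
  -- conclude η M ≤ CG
  have hkey : η * M ≤ CG := by
    refine le_of_forall_pos_le_add fun ε hε => ?_
    have hεB : 0 < ε / B := div_pos hε hB
    obtain ⟨_, ⟨z, hz, rfl⟩, hzgt⟩ := exists_lt_of_lt_csSup hne (show M - ε / B < M by linarith)
    have h1 := hmain z hz
    have h2 := hΦlb z hz
    have h3 := hΦub z
    have h4 : (∫ y, φ ‖z - y‖ ∂ρ) * (M - ε / B) ≤ (∫ y, φ ‖z - y‖ ∂ρ) * ‖u z‖ :=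
      mul_le_mul_of_nonneg_left hzgt.le (le_trans hηpos.le h2)
    have h5 : (∫ y, φ ‖z - y‖ ∂ρ) * (ε / B) ≤ B * (ε / B) :=
      mul_le_mul_of_nonneg_right h3 hεB.le
    have h6 : B * (ε / B) = ε := mul_div_cancel₀ ε hB.ne'
    nlinarith [hxM z hz]
  have : M ≤ CG / η := (le_div_iff₀ hηpos).2 (by linarith [hkey])
  exact le_trans (hxM x hx) this
end
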